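/- For discrete random variables Y, E, G and R with R a deterministic function of G, and for any β ∈ [0,1], the objective -I(Y;R) + β·I(R; E, G) equals (1-β)·I(Y; G | R) + β·I(R; E, G | Y) + C, where C = -I(Y;G) + β·I(Y; E, G) - β·I(Y; E | G) does not depend on the choice of R. -/
import Mathlib


open Finset Real

/-- Probability that random variable `X` (on finite sample space `Ω` with weights `μ`)
takes the value `x`. -/
noncomputable def pOf {Ω : Type*} [Fintype Ω] (μ : Ω → ℝ) {α : Type*} [DecidableEq α]
    (X : Ω → α) (x : α) : ℝ :=
  ∑ ω, if X ω = x then μ ω else 0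

/-- Mutual information of discrete random variables
`I(X;Y) = ∑_{x,y} p(x,y) log (p(x,y) / (p(x) p(y)))`. -/
noncomputable def MI {Ω : Type*} [Fintype Ω] {α β : Type*} [Fintype α] [Fintype β]
    [DecidableEq α] [DecidableEq β] (μ : Ω → ℝ) (X : Ω → α) (Y : Ω → β) : ℝ :=
  ∑ x : α, ∑ y : β,
    pOf μ (fun ω => (X ω, Y ω)) (x, y) *
      Real.log (pOf μ (fun ω => (X ω, Y ω)) (x, y) / (pOf μ X x * pOf μ Y y))

/-- Conditional mutual information of discrete random variables
`I(X;Y|Z) = ∑ p(x,y,z) log (p(x,y,z) p(z) / (p(x,z) p(y,z)))`. -/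
noncomputable def condMI {Ω : Type*} [Fintype Ω] {α β γ : Type*} [Fintype α] [Fintype β] [Fintype γ]
    [DecidableEq α] [DecidableEq β] [DecidableEq γ]
    (μ : Ω → ℝ) (X : Ω → α) (Y : Ω → β) (Z : Ω → γ) : ℝ :=
  ∑ x : α, ∑ y : β, ∑ z : γ,
    pOf μ (fun ω => (X ω, Y ω, Z ω)) (x, y, z) *
      Real.log (pOf μ (fun ω => (X ω, Y ω, Z ω)) (x, y, z) * pOf μ Z z /
        (pOf μ (fun ω => (X ω, Z ω)) (x, z) * pOf μ (fun ω => (Y ω, Z ω)) (y, z)))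

/-- Shannon entropy `H(X) = -∑ p(x) log p(x)` of a discrete random variable. -/
noncomputable def entropy {Ω : Type*} [Fintype Ω] {α : Type*} [Fintype α] [DecidableEq α]
    (μ : Ω → ℝ) (X : Ω → α) : ℝ :=
  -∑ x : α, pOf μ X x * Real.log (pOf μ X x)

section helpers
variable {Ω : Type*} [Fintype Ω] (μ : Ω → ℝ)

lemma pOf_nonneg (hμ : ∀ ω, 0 ≤ μ ω) {α : Type*} [DecidableEq α] (X : Ω → α) (x : α) :
    0 ≤ pOf μ X x := by
  apply Finset.sum_nonneg
  intro ω _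
  split <;> simp [hμ ω]

lemma pOf_congr {α α' : Type*} [DecidableEq α] [DecidableEq α'] {F : Ω → α} {F' : Ω → α'}
    {a : α} {a' : α'} (h : ∀ ω, F ω = a ↔ F' ω = a') : pOf μ F a = pOf μ F' a' := by
  unfold pOf
  apply Finset.sum_congr rfl
  intro ω _
  simp only [h ω]

lemma pOf_le (hμ : ∀ ω, 0 ≤ μ ω) {α α' : Type*} [DecidableEq α] [DecidableEq α']
    {F : Ω → α} {F' : Ω → α'} {a : α} {a' : α'} (h : ∀ ω, F ω = a → F' ω = a') :
    pOf μ F a ≤ pOf μ F' a' := by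
  apply Finset.sum_le_sum
  intro ω _
  by_cases hc : F ω = a
  · simp [hc, h ω hc]
  · simp only [if_neg hc]
    split <;> simp [hμ ω]

lemma pOf_eq_zero {α : Type*} [DecidableEq α] {F : Ω → α} {a : α} (h : ∀ ω, F ω ≠ a) :
    pOf μ F a = 0 := by
  unfold pOf
  apply Finset.sum_eq_zero
  intro ω _
  simp [h ω]

lemma pOf_marg {α γ : Type*} [DecidableEq α] [DecidableEq γ] [Fintype γ]
    (F : Ω → α) (V : Ω → γ) (a : α) :
    pOf μ F a = ∑ v, pOf μ (fun ω => (F ω, V ω)) (a, v) := by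
  unfold pOf
  rw [Finset.sum_comm]
  apply Finset.sum_congr rfl
  intro ω _
  simp [Prod.ext_iff, ite_and, Finset.sum_ite_eq]

variable {α β γ : Type*} [Fintype α] [Fintype β] [Fintype γ]
    [DecidableEq α] [DecidableEq β] [DecidableEq γ]

lemma MI_comm (X : Ω → α) (Y : Ω → β) : MI μ X Y = MI μ Y X := by
  unfold MI
  rw [Finset.sum_comm]
  apply Finset.sum_congr rfl; intro y _
  apply Finset.sum_congr rfl; intro x _
  have hp : pOf μ (fun ω => (X ω, Y ω)) (x, y) = pOf μ (fun ω => (Y ω, X ω)) (y, x) :=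
    pOf_congr μ (fun ω => by simp [Prod.ext_iff, and_comm])
  rw [hp, mul_comm (pOf μ X x)]

lemma MI_swap (X : Ω → α) (U : Ω → β) (V : Ω → γ) :
    MI μ X (fun ω => (U ω, V ω)) = MI μ X (fun ω => (V ω, U ω)) := by
  unfold MI
  apply Finset.sum_congr rfl; intro x _
  rw [Fintype.sum_prod_type, Finset.sum_comm, Fintype.sum_prod_type]
  apply Finset.sum_congr rfl; intro v _
  apply Finset.sum_congr rfl; intro u _
  have h1 : pOf μ (fun ω => (X ω, U ω, V ω)) (x, u, v)
      = pOf μ (fun ω => (X ω, V ω, U ω)) (x, v, u) :=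
    pOf_congr μ (fun ω => by simp [Prod.ext_iff]; tauto)
  have h2 : pOf μ (fun ω => (U ω, V ω)) (u, v) = pOf μ (fun ω => (V ω, U ω)) (v, u) :=
    pOf_congr μ (fun ω => by simp [Prod.ext_iff, and_comm])
  rw [h1, h2]

lemma MI_chain (hμ : ∀ ω, 0 ≤ μ ω) (X : Ω → α) (U : Ω → β) (V : Ω → γ) :
    MI μ X (fun ω => (U ω, V ω)) = MI μ X U + condMI μ X V U := by
  unfold MI condMI
  have hXU : ∀ x u, pOf μ (fun ω => (X ω, U ω)) (x, u)
      = ∑ v, pOf μ (fun ω => (X ω, U ω, V ω)) (x, u, v) := by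
    intro x u
    rw [pOf_marg μ (fun ω => (X ω, U ω)) V (x, u)]
    apply Finset.sum_congr rfl; intro v _
    exact pOf_congr μ (fun ω => by simp [Prod.ext_iff]; tauto)
  -- rewrite MI μ X U as a triple sum
  conv_rhs =>
    rw [show (∑ x : α, ∑ u : β, pOf μ (fun ω => (X ω, U ω)) (x, u) *
        Real.log (pOf μ (fun ω => (X ω, U ω)) (x, u) / (pOf μ X x * pOf μ U u)))
      = ∑ x : α, ∑ u : β, ∑ v : γ, pOf μ (fun ω => (X ω, U ω, V ω)) (x, u, v) *
        Real.log (pOf μ (fun ω => (X ω, U ω)) (x, u) / (pOf μ X x * pOf μ U u)) by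
      apply Finset.sum_congr rfl; intro x _
      apply Finset.sum_congr rfl; intro u _
      rw [hXU x u, Finset.sum_mul]]
  rw [← Finset.sum_add_distrib]
  apply Finset.sum_congr rfl; intro x _
  rw [Fintype.sum_prod_type]
  rw [show (∑ v : γ, ∑ u : β, pOf μ (fun ω => (X ω, V ω, U ω)) (x, v, u) *
      Real.log (pOf μ (fun ω => (X ω, V ω, U ω)) (x, v, u) * pOf μ U u /
        (pOf μ (fun ω => (X ω, U ω)) (x, u) * pOf μ (fun ω => (V ω, U ω)) (v, u))))
    = ∑ u : β, ∑ v : γ, pOf μ (fun ω => (X ω, U ω, V ω)) (x, u, v) *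
      Real.log (pOf μ (fun ω => (X ω, U ω, V ω)) (x, u, v) * pOf μ U u /
        (pOf μ (fun ω => (X ω, U ω)) (x, u) * pOf μ (fun ω => (U ω, V ω)) (u, v))) by
    rw [Finset.sum_comm]
    apply Finset.sum_congr rfl; intro u _
    apply Finset.sum_congr rfl; intro v _
    have h1 : pOf μ (fun ω => (X ω, V ω, U ω)) (x, v, u)
        = pOf μ (fun ω => (X ω, U ω, V ω)) (x, u, v) :=
      pOf_congr μ (fun ω => by simp [Prod.ext_iff]; tauto)
    have h2 : pOf μ (fun ω => (V ω, U ω)) (v, u) = pOf μ (fun ω => (U ω, V ω)) (u, v) :=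
      pOf_congr μ (fun ω => by simp [Prod.ext_iff, and_comm])
    rw [h1, h2]]
  rw [← Finset.sum_add_distrib]
  apply Finset.sum_congr rfl; intro u _
  rw [← Finset.sum_add_distrib]
  apply Finset.sum_congr rfl; intro v _
  -- pointwise identity
  set p3 := pOf μ (fun ω => (X ω, U ω, V ω)) (x, u, v) with hp3
  rcases eq_or_lt_of_le (pOf_nonneg μ hμ (fun ω => (X ω, U ω, V ω)) (x, u, v)) with h0 | hpos
  · rw [← hp3] at h0; rw [← h0]; ring
  · have hpos' : 0 < pOf μ (fun ω => (X ω, U ω, V ω)) (x, u, v) := hp3 ▸ hpos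
    have hX : 0 < pOf μ X x :=
      lt_of_lt_of_le hpos' (pOf_le μ hμ (fun ω h => by simp [Prod.ext_iff] at h; tauto))
    have hU : 0 < pOf μ U u :=
      lt_of_lt_of_le hpos' (pOf_le μ hμ (fun ω h => by simp [Prod.ext_iff] at h; tauto))
    have hXU' : 0 < pOf μ (fun ω => (X ω, U ω)) (x, u) :=
      lt_of_lt_of_le hpos' (pOf_le μ hμ (fun ω h => by simp [Prod.ext_iff] at h ⊢; tauto))
    have hUV : 0 < pOf μ (fun ω => (U ω, V ω)) (u, v) :=
      lt_of_lt_of_le hpos' (pOf_le μ hμ (fun ω h => by simp [Prod.ext_iff] at h ⊢; tauto))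
    rw [Real.log_div hpos.ne' (mul_ne_zero hX.ne' hUV.ne'),
        Real.log_mul hX.ne' hUV.ne',
        Real.log_div hXU'.ne' (mul_ne_zero hX.ne' hU.ne'),
        Real.log_mul hX.ne' hU.ne',
        Real.log_div (mul_ne_zero hpos.ne' hU.ne') (mul_ne_zero hXU'.ne' hUV.ne'),
        Real.log_mul hpos.ne' hU.ne', Real.log_mul hXU'.ne' hUV.ne']
    ring

lemma condMI_det_right {ρ : Type*} [Fintype ρ] [DecidableEq ρ] (hμ : ∀ ω, 0 ≤ μ ω)
    (X : Ω → α) (Z : Ω → γ) (τ : γ → ρ) :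
    condMI μ X (fun ω => τ (Z ω)) Z = 0 := by
  unfold condMI
  apply Finset.sum_eq_zero; intro x _
  apply Finset.sum_eq_zero; intro r _
  apply Finset.sum_eq_zero; intro z _
  by_cases hr : r = τ z
  · subst hr
    have h1 : pOf μ (fun ω => (X ω, τ (Z ω), Z ω)) (x, τ z, z)
        = pOf μ (fun ω => (X ω, Z ω)) (x, z) :=
      pOf_congr μ (fun ω => by simp [Prod.ext_iff]; tauto)
    have h2 : pOf μ (fun ω => (τ (Z ω), Z ω)) (τ z, z) = pOf μ Z z :=
      pOf_congr μ (fun ω => by simp [Prod.ext_iff]; tauto)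
    rw [h1, h2]
    rcases eq_or_lt_of_le (pOf_nonneg μ hμ (fun ω => (X ω, Z ω)) (x, z)) with h0 | hpos
    · rw [← h0]; ring
    · have hZ : 0 < pOf μ Z z :=
        lt_of_lt_of_le hpos (pOf_le μ hμ (fun ω h => by simp [Prod.ext_iff] at h; tauto))
      rw [mul_comm (pOf μ (fun ω => (X ω, Z ω)) (x, z)) (pOf μ Z z),
          div_self (by positivity), Real.log_one, mul_zero]
  · rw [pOf_eq_zero μ (fun ω h => by simp [Prod.ext_iff] at h; exact hr (h.2.1.symm ▸ h.2.2 ▸ rfl))]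
    ring

lemma condMI_det_left {ρ : Type*} [Fintype ρ] [DecidableEq ρ] (hμ : ∀ ω, 0 ≤ μ ω)
    (Y : Ω → β) (Z : Ω → γ) (τ : γ → ρ) :
    condMI μ (fun ω => τ (Z ω)) Y Z = 0 := by
  unfold condMI
  apply Finset.sum_eq_zero; intro r _
  apply Finset.sum_eq_zero; intro y _
  apply Finset.sum_eq_zero; intro z _
  by_cases hr : r = τ z
  · subst hr
    have h1 : pOf μ (fun ω => (τ (Z ω), Y ω, Z ω)) (τ z, y, z)
        = pOf μ (fun ω => (Y ω, Z ω)) (y, z) :=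
      pOf_congr μ (fun ω => by simp [Prod.ext_iff]; tauto)
    have h2 : pOf μ (fun ω => (τ (Z ω), Z ω)) (τ z, z) = pOf μ Z z :=
      pOf_congr μ (fun ω => by simp [Prod.ext_iff]; tauto)
    rw [h1, h2]
    rcases eq_or_lt_of_le (pOf_nonneg μ hμ (fun ω => (Y ω, Z ω)) (y, z)) with h0 | hpos
    · rw [← h0]; ring
    · have hZ : 0 < pOf μ Z z :=
        lt_of_lt_of_le hpos (pOf_le μ hμ (fun ω h => by simp [Prod.ext_iff] at h; tauto))
      rw [mul_comm (pOf μ Z z) (pOf μ (fun ω => (Y ω, Z ω)) (y, z))]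
      rw [div_self (by positivity), Real.log_one, mul_zero]
  · rw [pOf_eq_zero μ (fun ω h => by simp [Prod.ext_iff] at h; exact hr (h.1.symm ▸ h.2.2 ▸ rfl))]
    ring

end helpers

/-- Chain-rule decomposition of the TGIB objective: for `R = σ(G)` a deterministic
function of `G` and `β ∈ [0,1]`,
`-I(Y;R) + β·I(R;E,G) = (1-β)·I(Y;G|R) + β·I(R;E,G|Y) + C` where
`C = -I(Y;G) + β·I(Y;E,G) - β·I(Y;E|G)` does not depend on `R`. -/
theorem tgib_objective_decomposition {Ω α β' γ ρ : Type*} [Fintype Ω] [Fintype α]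
    [Fintype β'] [Fintype γ] [Fintype ρ]
    [DecidableEq α] [DecidableEq β'] [DecidableEq γ] [DecidableEq ρ]
    (μ : Ω → ℝ) (hμ : ∀ ω, 0 ≤ μ ω) (hsum : ∑ ω, μ ω = 1)
    (Y : Ω → α) (E : Ω → β') (G : Ω → γ) (σ : γ → ρ)
    (β : ℝ) (hβ : β ∈ Set.Icc (0 : ℝ) 1) :
    -MI μ Y (fun ω => σ (G ω))
        + β * MI μ (fun ω => σ (G ω)) (fun ω => (E ω, G ω))
      = (1 - β) * condMI μ Y G (fun ω => σ (G ω))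
        + β * condMI μ (fun ω => σ (G ω)) (fun ω => (E ω, G ω)) Y
        + (-MI μ Y G + β * MI μ Y (fun ω => (E ω, G ω)) - β * condMI μ Y E G) := by
  -- h1 : I(Y;G|R) = I(Y;G) - I(Y;R)
  have h1 : condMI μ Y G (fun ω => σ (G ω)) = MI μ Y G - MI μ Y (fun ω => σ (G ω)) := by
    have c1 := MI_chain μ hμ Y (fun ω => σ (G ω)) G
    have c2 := MI_chain μ hμ Y G (fun ω => σ (G ω))
    have sw := MI_swap μ Y (fun ω => σ (G ω)) G
    have d := condMI_det_right μ hμ Y G σ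
    rw [sw, c2] at c1
    rw [d] at c2
    linarith
  -- h2 : I(R;E,G|Y) = I(R;E,G) - I(Y;R)
  have h2 : condMI μ (fun ω => σ (G ω)) (fun ω => (E ω, G ω)) Y
      = MI μ (fun ω => σ (G ω)) (fun ω => (E ω, G ω)) - MI μ Y (fun ω => σ (G ω)) := by
    have c1 := MI_chain μ hμ (fun ω => σ (G ω)) (fun ω => (E ω, G ω)) Y
    have c2 := MI_chain μ hμ (fun ω => σ (G ω)) Y (fun ω => (E ω, G ω))
    have sw := MI_swap μ (fun ω => σ (G ω)) (fun ω => (E ω, G ω)) Y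
    have d : condMI μ (fun ω => σ (G ω)) Y (fun ω => (E ω, G ω)) = 0 :=
      condMI_det_left μ hμ Y (fun ω => (E ω, G ω)) (fun p => σ p.2)
    have cm := MI_comm μ (fun ω => σ (G ω)) Y
    rw [sw, c2] at c1
    rw [d] at c1
    linarith
  -- h3 : I(Y;E,G) = I(Y;G) + I(Y;E|G)
  have h3 : MI μ Y (fun ω => (E ω, G ω)) = MI μ Y G + condMI μ Y E G := by
    have sw := MI_swap μ Y E G
    have c := MI_chain μ hμ Y G E
    rw [← sw] at c
    exact c
  rw [h1, h2, h3]
  ring
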